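/- (Proposition 5.6, explicit start of the iteration in the multiplicative-noise case) Let L > 0, set m_L = √3·L^{5/4}e^{(5/2)L^{1/4}} and M₀(t) = e^{4Lt+2L}, and define v₀(t,x) = (m_L e^{2Lt+L}/(2π)^{3/2})·(sin x₃, 0, 0), Ξ₀(t,x) = (m_L e^{2Lt+L}/(2π)³)·(sin x₃, cos x₃, 0), M_v(t,x) = (m_L(2L + 1/2)e^{2Lt+L}/(2π)^{3/2})·M(x₃) with M(x₃) having (1,3) and (3,1) entries −cos x₃ and all other entries 0, and M_Ξ(t,x) = (m_L(2L + 1/2)e^{2Lt+L}/(2π)³)·N(x₃) with N(x₃) having rows (0, 0, −cos x₃), (0, 0, sin x₃), (cos x₃, −sin x₃, 0). Then: (i) for every t, v₀(t,·) and Ξ₀(t,·) are divergence-free and mean-zero on 𝕋³ with ‖v₀(t,·)‖_{L²(𝕋³)} = m_L M₀(t)^{1/2}/√2 and ‖Ξ₀(t,·)‖_{L²(𝕋³)} = m_L M₀(t)^{1/2}/(2π)^{3/2}; (ii) M_v is symmetric and trace-free and M_Ξ is skew-symmetric at every (t,x); (iii) for any functions Υ₁, Υ₂ : ℝ → ℝ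 with Υ₁ nowhere zero, ∂_t v₀ + (1/2)v₀ + div(Υ₁(t)·(v₀ ⊗ v₀) − Υ₁(t)⁻¹Υ₂(t)²·(Ξ₀ ⊗ Ξ₀)) = div M_v and ∂_t Ξ₀ + (1/2)Ξ₀ + Υ₁(t)·div(v₀ ⊗ Ξ₀ − Ξ₀ ⊗ v₀) = div M_Ξ everywhere. -/

import Mathlib

open MeasureTheory
open scoped Matrix

/-- The fundamental domain `[−π, π]³` of the torus `𝕋³`. -/
def cube : Set (Fin 3 → ℝ) := {x | ∀ i, x i ∈ Set.Icc (-Real.pi) Real.pi}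

/-- Outer product of two vectors in ℝ³: `(u ⊗ w)ᵢⱼ = uᵢ wⱼ`. -/
def outer (u w : Fin 3 → ℝ) : Matrix (Fin 3) (Fin 3) ℝ := fun i j => u i * w j

/-- Divergence of a matrix-valued field: `(div M)ᵢ = ∑ⱼ ∂ⱼ Mᵢⱼ`. -/
noncomputable def divMat (M : (Fin 3 → ℝ) → Matrix (Fin 3) (Fin 3) ℝ)
    (x : Fin 3 → ℝ) (i : Fin 3) : ℝ :=
  ∑ j, fderiv ℝ (fun y => M y i j) x (Pi.single j 1)

/-- `m_L = √3·L^{5/4}·e^{(5/2)L^{1/4}}`. -/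
noncomputable def mL (L : ℝ) : ℝ :=
  Real.sqrt 3 * L ^ ((5 : ℝ) / 4) * Real.exp (5 / 2 * L ^ ((1 : ℝ) / 4))

/-- `M₀(t) = e^{4Lt + 2L}`. -/
noncomputable def M0 (L t : ℝ) : ℝ := Real.exp (4 * L * t + 2 * L)

/-- `v₀(t,x) = (m_L e^{2Lt+L}/(2π)^{3/2})·(sin x₃, 0, 0)`. -/
noncomputable def v0 (L t : ℝ) (x : Fin 3 → ℝ) : Fin 3 → ℝ :=
  ![mL L * Real.exp (2 * L * t + L) / (2 * Real.pi) ^ ((3 : ℝ) / 2) * Real.sin (x 2), 0, 0]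

/-- `Ξ₀(t,x) = (m_L e^{2Lt+L}/(2π)³)·(sin x₃, cos x₃, 0)`. -/
noncomputable def Xi0 (L t : ℝ) (x : Fin 3 → ℝ) : Fin 3 → ℝ :=
  ![mL L * Real.exp (2 * L * t + L) / (2 * Real.pi) ^ (3 : ℕ) * Real.sin (x 2),
    mL L * Real.exp (2 * L * t + L) / (2 * Real.pi) ^ (3 : ℕ) * Real.cos (x 2), 0]

/-- `M_v(t,x) = (m_L(2L + 1/2)e^{2Lt+L}/(2π)^{3/2})·M(x₃)` with
`M(x₃)₁₃ = M(x₃)₃₁ = −cos x₃`, other entries 0. -/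
noncomputable def Mv (L t : ℝ) (x : Fin 3 → ℝ) : Matrix (Fin 3) (Fin 3) ℝ :=
  (mL L * (2 * L + 1 / 2) * Real.exp (2 * L * t + L) / (2 * Real.pi) ^ ((3 : ℝ) / 2)) •
    !![0, 0, -Real.cos (x 2); 0, 0, 0; -Real.cos (x 2), 0, 0]

/-- `M_Ξ(t,x) = (m_L(2L + 1/2)e^{2Lt+L}/(2π)³)·N(x₃)` with `N(x₃)` having rows
`(0, 0, −cos x₃)`, `(0, 0, sin x₃)`, `(cos x₃, −sin x₃, 0)`. -/
noncomputable def MXi (L t : ℝ) (x : Fin 3 → ℝ) : Matrix (Fin 3) (Fin 3) ℝ :=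
  (mL L * (2 * L + 1 / 2) * Real.exp (2 * L * t + L) / (2 * Real.pi) ^ (3 : ℕ)) •
    !![0, 0, -Real.cos (x 2); 0, 0, Real.sin (x 2); Real.cos (x 2), -Real.sin (x 2), 0]


section Prop56Helpers

lemma fderivSingle3 (g : ℝ → ℝ) {g' : ℝ} (x : Fin 3 → ℝ) (hg : HasDerivAt g g' (x 2)) (j : Fin 3) :
    fderiv ℝ (fun y : Fin 3 → ℝ => g (y 2)) x (Pi.single j 1) = if j = 2 then g' else 0 := by
  have h1 : HasFDerivAt (fun y : Fin 3 → ℝ => y 2)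
      (ContinuousLinearMap.proj (R := ℝ) (φ := fun _ : Fin 3 => ℝ) 2) x :=
    hasFDerivAt_apply 2 x
  have h2 : HasFDerivAt (fun y : Fin 3 → ℝ => g (y 2))
      ((ContinuousLinearMap.smulRight (1 : ℝ →L[ℝ] ℝ) g').comp
        (ContinuousLinearMap.proj (R := ℝ) (φ := fun _ : Fin 3 => ℝ) 2)) x :=
    hg.hasFDerivAt.comp x h1
  rw [h2.fderiv]
  rcases eq_or_ne j 2 with h | h
  · simp [Pi.single_apply, h]
  · simp [Pi.single_apply, h, Ne.symm h]

/-- divergence computation for matrix fields depending only on the third coordinate -/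
lemma divMat_eq3 (M : (Fin 3 → ℝ) → Matrix (Fin 3) (Fin 3) ℝ)
    (g : Fin 3 → Fin 3 → ℝ → ℝ) (g' : Fin 3 → Fin 3 → ℝ) (x : Fin 3 → ℝ)
    (hM : ∀ y i j, M y i j = g i j (y 2))
    (hg : ∀ i j, HasDerivAt (g i j) (g' i j) (x 2)) (i : Fin 3) :
    divMat M x i = g' i 2 := by
  unfold divMat
  have key : ∀ j, fderiv ℝ (fun y => M y i j) x (Pi.single j 1) = if j = 2 then g' i j else 0 := by
    intro j
    have hfun : (fun y => M y i j) = fun y => g i j (y 2) := funext fun y => hM y i j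
    rw [hfun]
    exact fderivSingle3 _ x (hg i j) j
  simp [key, Fin.sum_univ_three]

lemma cube_meas : MeasurableSet cube := by
  have : cube = Set.pi Set.univ (fun _ : Fin 3 => Set.Icc (-Real.pi) Real.pi) := by
    ext x
    simp only [cube, Set.mem_setOf_eq, Set.mem_pi, Set.mem_univ, forall_true_left, true_implies]
  rw [this]
  exact MeasurableSet.univ_pi fun _ => measurableSet_Icc

lemma cube_prod (f : Fin 3 → ℝ → ℝ) :
    ∫ x in cube, ∏ i, f i (x i) = ∏ i, ∫ z in Set.Icc (-Real.pi) Real.pi, f i z := by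
  rw [← integral_indicator cube_meas]
  have h : ∀ x : Fin 3 → ℝ, cube.indicator (fun x => ∏ i, f i (x i)) x
      = ∏ i, (Set.Icc (-Real.pi) Real.pi).indicator (f i) (x i) := by
    intro x
    by_cases hx : x ∈ cube
    · rw [Set.indicator_of_mem hx]
      exact Finset.prod_congr rfl fun i _ => (Set.indicator_of_mem (hx i) _).symm
    · rw [Set.indicator_of_notMem hx]
      obtain ⟨i, hi⟩ := not_forall.mp hx
      exact (Finset.prod_eq_zero (Finset.mem_univ i) (Set.indicator_of_notMem hi _)).symm
  simp_rw [h]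
  rw [MeasureTheory.integral_fintype_prod_volume_eq_prod (𝕜 := ℝ)
    (f := fun i => (Set.Icc (-Real.pi) Real.pi).indicator (f i))]
  exact Finset.prod_congr rfl fun i _ => by rw [integral_indicator measurableSet_Icc]

lemma icc_to_interval (f : ℝ → ℝ) :
    ∫ z in Set.Icc (-Real.pi) Real.pi, f z = ∫ z in (-Real.pi)..Real.pi, f z := by
  rw [MeasureTheory.integral_Icc_eq_integral_Ioc,
    intervalIntegral.integral_of_le (by linarith [Real.pi_pos])]

lemma cube_third (g : ℝ → ℝ) :
    ∫ x in cube, g (x 2) = (2 * Real.pi) ^ 2 * ∫ z in (-Real.pi)..Real.pi, g z := by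
  have h := cube_prod ![fun _ => (1 : ℝ), fun _ => (1 : ℝ), g]
  simp only [Fin.prod_univ_three, Matrix.cons_val_zero, Matrix.cons_val_one, Matrix.head_cons,
    Matrix.cons_val_two, Matrix.tail_cons, one_mul] at h
  rw [h]
  have h1 : ∫ z in Set.Icc (-Real.pi) Real.pi, (1 : ℝ) = 2 * Real.pi := by
    simp [Real.volume_Icc]
    rw [max_eq_left (by linarith [Real.pi_pos])]
    ring
  rw [h1, icc_to_interval]; ring

end Prop56Helpers


section Prop56Aux

/-- profile of `v0` as functions of the third coordinate -/
noncomputable def pv (a : ℝ) : Fin 3 → ℝ → ℝ :=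
  ![fun z => a * Real.sin z, fun _ => 0, fun _ => 0]

/-- profile of `Xi0` as functions of the third coordinate -/
noncomputable def pX (b : ℝ) : Fin 3 → ℝ → ℝ :=
  ![fun z => b * Real.sin z, fun z => b * Real.cos z, fun _ => 0]

noncomputable def dpv (a w : ℝ) : Fin 3 → ℝ := ![a * Real.cos w, 0, 0]

noncomputable def dpX (b w : ℝ) : Fin 3 → ℝ := ![b * Real.cos w, -(b * Real.sin w), 0]

lemma hpv (a w : ℝ) (i : Fin 3) : HasDerivAt (pv a i) (dpv a w i) w := by
  fin_cases i
  · simpa [pv, dpv] using (Real.hasDerivAt_sin w).const_mul a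
  · simpa [pv, dpv] using hasDerivAt_const w (0 : ℝ)
  · simpa [pv, dpv] using hasDerivAt_const w (0 : ℝ)

lemma hpX (b w : ℝ) (i : Fin 3) : HasDerivAt (pX b i) (dpX b w i) w := by
  fin_cases i
  · simpa [pX, dpX] using (Real.hasDerivAt_sin w).const_mul b
  · simpa [pX, dpX] using (Real.hasDerivAt_cos w).const_mul b
  · simpa [pX, dpX] using hasDerivAt_const w (0 : ℝ)

noncomputable def sqProfile (c : ℝ) : ℝ → ℝ := fun z => c ^ 2 * Real.sin z ^ 2

noncomputable def constProfile (c : ℝ) : ℝ → ℝ := fun _ => c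

lemma v0_profile (L t : ℝ) (y : Fin 3 → ℝ) (i : Fin 3) :
    v0 L t y i = pv (mL L * Real.exp (2 * L * t + L) / (2 * Real.pi) ^ ((3 : ℝ) / 2)) i (y 2) := by
  fin_cases i <;> simp [v0, pv, Matrix.vecHead, Matrix.vecTail]

lemma Xi0_profile (L t : ℝ) (y : Fin 3 → ℝ) (i : Fin 3) :
    Xi0 L t y i = pX (mL L * Real.exp (2 * L * t + L) / (2 * Real.pi) ^ (3 : ℕ)) i (y 2) := by
  fin_cases i <;> simp [Xi0, pX, Matrix.vecHead, Matrix.vecTail]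

lemma divVec_eq3 (V : (Fin 3 → ℝ) → Fin 3 → ℝ) (p : Fin 3 → ℝ → ℝ) (dp : Fin 3 → ℝ)
    (x : Fin 3 → ℝ) (hV : ∀ y i, V y i = p i (y 2)) (hp : ∀ i, HasDerivAt (p i) (dp i) (x 2)) :
    (∑ i, fderiv ℝ (fun y => V y i) x (Pi.single i 1)) = dp 2 := by
  have key : ∀ j : Fin 3, fderiv ℝ (fun y => V y j) x (Pi.single j 1)
      = if j = 2 then dp j else 0 := by
    intro j
    rw [show (fun y => V y j) = fun y => p j (y 2) from funext fun y => hV y j]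
    exact fderivSingle3 _ x (hp j) j
  simp [key, Fin.sum_univ_three]

lemma div_quad1 (L t c1 c2 : ℝ) (x : Fin 3 → ℝ) (i : Fin 3) :
    divMat (fun y => c1 • outer (v0 L t y) (v0 L t y) -
      c2 • outer (Xi0 L t y) (Xi0 L t y)) x i = 0 := by
  set a := mL L * Real.exp (2 * L * t + L) / (2 * Real.pi) ^ ((3 : ℝ) / 2) with ha
  set b := mL L * Real.exp (2 * L * t + L) / (2 * Real.pi) ^ (3 : ℕ) with hb
  have h := divMat_eq3
    (fun y => c1 • outer (v0 L t y) (v0 L t y) - c2 • outer (Xi0 L t y) (Xi0 L t y))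
    (fun i j z => c1 * (pv a i z * pv a j z) - c2 * (pX b i z * pX b j z))
    (fun i j => c1 * (dpv a (x 2) i * pv a j (x 2) + pv a i (x 2) * dpv a (x 2) j)
      - c2 * (dpX b (x 2) i * pX b j (x 2) + pX b i (x 2) * dpX b (x 2) j)) x
    (fun y i j => by
      simp only [Matrix.sub_apply, Matrix.smul_apply, smul_eq_mul, outer,
        v0_profile L t y, Xi0_profile L t y, ← ha, ← hb])
    (fun i j =>
      (((hpv a (x 2) i).mul (hpv a (x 2) j)).const_mul c1).sub
        (((hpX b (x 2) i).mul (hpX b (x 2) j)).const_mul c2)) i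
  rw [h]
  simp [pv, pX, dpv, dpX, Matrix.vecHead, Matrix.vecTail]

lemma div_quad2 (L t : ℝ) (x : Fin 3 → ℝ) (i : Fin 3) :
    divMat (fun y => outer (v0 L t y) (Xi0 L t y) -
      outer (Xi0 L t y) (v0 L t y)) x i = 0 := by
  set a := mL L * Real.exp (2 * L * t + L) / (2 * Real.pi) ^ ((3 : ℝ) / 2) with ha
  set b := mL L * Real.exp (2 * L * t + L) / (2 * Real.pi) ^ (3 : ℕ) with hb
  have h := divMat_eq3
    (fun y => outer (v0 L t y) (Xi0 L t y) - outer (Xi0 L t y) (v0 L t y))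
    (fun i j z => pv a i z * pX b j z - pX b i z * pv a j z)
    (fun i j => (dpv a (x 2) i * pX b j (x 2) + pv a i (x 2) * dpX b (x 2) j)
      - (dpX b (x 2) i * pv a j (x 2) + pX b i (x 2) * dpv a (x 2) j)) x
    (fun y i j => by
      simp only [Matrix.sub_apply, outer, v0_profile L t y, Xi0_profile L t y, ← ha, ← hb])
    (fun i j =>
      ((hpv a (x 2) i).mul (hpX b (x 2) j)).sub ((hpX b (x 2) i).mul (hpv a (x 2) j))) i
  rw [h]
  simp [pv, pX, dpv, dpX, Matrix.vecHead, Matrix.vecTail]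

lemma div_Mv (L t : ℝ) (x : Fin 3 → ℝ) (i : Fin 3) :
    divMat (fun y => Mv L t y) x i =
      ![mL L * (2 * L + 1 / 2) * Real.exp (2 * L * t + L) / (2 * Real.pi) ^ ((3 : ℝ) / 2) *
        Real.sin (x 2), 0, 0] i := by
  have h := divMat_eq3 (fun y => Mv L t y)
    (fun i j => !![(fun _ => 0), (fun _ => 0),
      (fun z => mL L * (2 * L + 1 / 2) * Real.exp (2 * L * t + L) /
        (2 * Real.pi) ^ ((3 : ℝ) / 2) * -Real.cos z);
      (fun _ => 0), (fun _ => 0), (fun _ => 0);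
      (fun z => mL L * (2 * L + 1 / 2) * Real.exp (2 * L * t + L) /
        (2 * Real.pi) ^ ((3 : ℝ) / 2) * -Real.cos z), (fun _ => 0), (fun _ => 0)] i j)
    (fun i j => !![0, 0, mL L * (2 * L + 1 / 2) * Real.exp (2 * L * t + L) /
        (2 * Real.pi) ^ ((3 : ℝ) / 2) * Real.sin (x 2); 0, 0, 0;
      mL L * (2 * L + 1 / 2) * Real.exp (2 * L * t + L) /
        (2 * Real.pi) ^ ((3 : ℝ) / 2) * Real.sin (x 2), 0, 0] i j) x
    (fun y i j => by
      fin_cases i <;> fin_cases j <;>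
        simp [Mv, Matrix.vecHead, Matrix.vecTail] <;> ring)
    (fun i j => by
      fin_cases i <;> fin_cases j <;>
        simp only [Matrix.cons_val', Matrix.cons_val_zero, Matrix.cons_val_one,
          Matrix.head_cons, Matrix.head_fin_const, Matrix.cons_val_fin_one, Matrix.empty_val',
          Matrix.cons_val_two, Matrix.tail_cons, Matrix.of_apply, Matrix.vecHead,
          Matrix.vecTail, Function.comp] <;>
        first
          | exact hasDerivAt_const (x 2) (0 : ℝ)
          | simpa using ((Real.hasDerivAt_cos (x 2)).neg.const_mul
              (mL L * (2 * L + 1 / 2) * Real.exp (2 * L * t + L) /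
                (2 * Real.pi) ^ ((3 : ℝ) / 2)))) i
  rw [h]
  fin_cases i <;> simp [Matrix.vecHead, Matrix.vecTail]

lemma div_MXi (L t : ℝ) (x : Fin 3 → ℝ) (i : Fin 3) :
    divMat (fun y => MXi L t y) x i =
      ![mL L * (2 * L + 1 / 2) * Real.exp (2 * L * t + L) / (2 * Real.pi) ^ (3 : ℕ) *
        Real.sin (x 2),
        mL L * (2 * L + 1 / 2) * Real.exp (2 * L * t + L) / (2 * Real.pi) ^ (3 : ℕ) *
        Real.cos (x 2), 0] i := by
  have h := divMat_eq3 (fun y => MXi L t y)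
    (fun i j => !![(fun _ => 0), (fun _ => 0),
      (fun z => mL L * (2 * L + 1 / 2) * Real.exp (2 * L * t + L) /
        (2 * Real.pi) ^ (3 : ℕ) * -Real.cos z);
      (fun _ => 0), (fun _ => 0),
      (fun z => mL L * (2 * L + 1 / 2) * Real.exp (2 * L * t + L) /
        (2 * Real.pi) ^ (3 : ℕ) * Real.sin z);
      (fun z => mL L * (2 * L + 1 / 2) * Real.exp (2 * L * t + L) /
        (2 * Real.pi) ^ (3 : ℕ) * Real.cos z),
      (fun z => mL L * (2 * L + 1 / 2) * Real.exp (2 * L * t + L) /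
        (2 * Real.pi) ^ (3 : ℕ) * -Real.sin z), (fun _ => 0)] i j)
    (fun i j => !![0, 0, mL L * (2 * L + 1 / 2) * Real.exp (2 * L * t + L) /
        (2 * Real.pi) ^ (3 : ℕ) * Real.sin (x 2);
      0, 0, mL L * (2 * L + 1 / 2) * Real.exp (2 * L * t + L) /
        (2 * Real.pi) ^ (3 : ℕ) * Real.cos (x 2);
      mL L * (2 * L + 1 / 2) * Real.exp (2 * L * t + L) /
        (2 * Real.pi) ^ (3 : ℕ) * -Real.sin (x 2),
      mL L * (2 * L + 1 / 2) * Real.exp (2 * L * t + L) /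
        (2 * Real.pi) ^ (3 : ℕ) * -Real.cos (x 2), 0] i j) x
    (fun y i j => by
      fin_cases i <;> fin_cases j <;>
        simp [MXi, Matrix.vecHead, Matrix.vecTail] <;> ring)
    (fun i j => by
      fin_cases i <;> fin_cases j <;>
        simp only [Matrix.cons_val', Matrix.cons_val_zero, Matrix.cons_val_one,
          Matrix.head_cons, Matrix.head_fin_const, Matrix.cons_val_fin_one, Matrix.empty_val',
          Matrix.cons_val_two, Matrix.tail_cons, Matrix.of_apply, Matrix.vecHead,
          Matrix.vecTail, Function.comp] <;>
        first
          | exact hasDerivAt_const (x 2) (0 : ℝ)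
          | simpa using ((Real.hasDerivAt_cos (x 2)).neg.const_mul
              (mL L * (2 * L + 1 / 2) * Real.exp (2 * L * t + L) / (2 * Real.pi) ^ (3 : ℕ)))
          | simpa using ((Real.hasDerivAt_sin (x 2)).const_mul
              (mL L * (2 * L + 1 / 2) * Real.exp (2 * L * t + L) / (2 * Real.pi) ^ (3 : ℕ)))
          | simpa using ((Real.hasDerivAt_cos (x 2)).const_mul
              (mL L * (2 * L + 1 / 2) * Real.exp (2 * L * t + L) / (2 * Real.pi) ^ (3 : ℕ)))
          | simpa using ((Real.hasDerivAt_sin (x 2)).neg.const_mul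
              (mL L * (2 * L + 1 / 2) * Real.exp (2 * L * t + L) / (2 * Real.pi) ^ (3 : ℕ)))) i
  rw [h]
  fin_cases i <;> simp [Matrix.vecHead, Matrix.vecTail]

end Prop56Aux

/-- **Proposition 5.6 (explicit start of the iteration, multiplicative-noise case).**
(i) `v₀(t,·)` and `Ξ₀(t,·)` are divergence-free and mean-zero with
`‖v₀(t,·)‖_{L²} = m_L M₀(t)^{1/2}/√2` and `‖Ξ₀(t,·)‖_{L²} = m_L M₀(t)^{1/2}/(2π)^{3/2}`;
(ii) `M_v` is symmetric and trace-free and `M_Ξ` is skew-symmetric;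
(iii) for any `Υ₁, Υ₂ : ℝ → ℝ` with `Υ₁` nowhere zero,
`∂_t v₀ + (1/2)v₀ + div(Υ₁·(v₀ ⊗ v₀) − Υ₁⁻¹Υ₂²·(Ξ₀ ⊗ Ξ₀)) = div M_v` and
`∂_t Ξ₀ + (1/2)Ξ₀ + Υ₁·div(v₀ ⊗ Ξ₀ − Ξ₀ ⊗ v₀) = div M_Ξ` everywhere. -/
theorem prop56_start_of_iteration (L : ℝ) (hL : 0 < L) :
    ((∀ (t : ℝ) (x : Fin 3 → ℝ),
        (∑ i, fderiv ℝ (fun y => v0 L t y i) x (Pi.single i 1)) = 0 ∧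
        (∑ i, fderiv ℝ (fun y => Xi0 L t y i) x (Pi.single i 1)) = 0) ∧
      (∀ (t : ℝ) (i : Fin 3),
        (∫ x in cube, v0 L t x i) = 0 ∧ (∫ x in cube, Xi0 L t x i) = 0) ∧
      (∀ t : ℝ,
        Real.sqrt (∫ x in cube, ∑ i, (v0 L t x i) ^ 2) =
          mL L * Real.sqrt (M0 L t) / Real.sqrt 2 ∧
        Real.sqrt (∫ x in cube, ∑ i, (Xi0 L t x i) ^ 2) =
          mL L * Real.sqrt (M0 L t) / (2 * Real.pi) ^ ((3 : ℝ) / 2))) ∧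
    (∀ (t : ℝ) (x : Fin 3 → ℝ),
      (Mv L t x)ᵀ = Mv L t x ∧ Matrix.trace (Mv L t x) = 0 ∧
      (MXi L t x)ᵀ = -(MXi L t x)) ∧
    (∀ Υ₁ Υ₂ : ℝ → ℝ, (∀ t, Υ₁ t ≠ 0) →
      (∀ (t : ℝ) (x : Fin 3 → ℝ) (i : Fin 3),
        deriv (fun s => v0 L s x i) t + (1 / 2) * v0 L t x i +
          divMat (fun y => Υ₁ t • outer (v0 L t y) (v0 L t y) -
            ((Υ₁ t)⁻¹ * (Υ₂ t) ^ 2) • outer (Xi0 L t y) (Xi0 L t y)) x i =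
        divMat (fun y => Mv L t y) x i) ∧
      (∀ (t : ℝ) (x : Fin 3 → ℝ) (i : Fin 3),
        deriv (fun s => Xi0 L s x i) t + (1 / 2) * Xi0 L t x i +
          Υ₁ t * divMat (fun y => outer (v0 L t y) (Xi0 L t y) -
            outer (Xi0 L t y) (v0 L t y)) x i =
        divMat (fun y => MXi L t y) x i)) := by
  have hpi := Real.pi_pos
  have hmL : 0 ≤ mL L := by
    unfold mL
    positivity
  have h2pi : (0 : ℝ) < 2 * Real.pi := by positivity
  have hP2 : ((2 * Real.pi) ^ ((3 : ℝ) / 2)) ^ (2 : ℕ) = (2 * Real.pi) ^ (3 : ℕ) := by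
    rw [← Real.rpow_natCast ((2 * Real.pi) ^ ((3 : ℝ) / 2)) 2, ← Real.rpow_mul h2pi.le,
      ← Real.rpow_natCast (2 * Real.pi) 3]
    norm_num
  have hPpos : (0 : ℝ) < (2 * Real.pi) ^ ((3 : ℝ) / 2) := Real.rpow_pos_of_pos h2pi _
  have hE : ∀ t : ℝ, Real.sqrt (M0 L t) = Real.exp (2 * L * t + L) := by
    intro t
    have h : M0 L t = Real.exp (2 * L * t + L) ^ 2 := by
      unfold M0
      rw [sq, ← Real.exp_add]
      ring_nf
    rw [h, Real.sqrt_sq (Real.exp_pos _).le]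
  refine ⟨⟨?_, ?_, ?_⟩, ?_, ?_⟩
  · -- divergence free
    intro t x
    constructor
    · rw [divVec_eq3 (fun y => v0 L t y)
        (pv (mL L * Real.exp (2 * L * t + L) / (2 * Real.pi) ^ ((3 : ℝ) / 2)))
        (dpv (mL L * Real.exp (2 * L * t + L) / (2 * Real.pi) ^ ((3 : ℝ) / 2)) (x 2)) x
        (v0_profile L t) (hpv _ (x 2))]
      simp [dpv, Matrix.vecHead, Matrix.vecTail]
    · rw [divVec_eq3 (fun y => Xi0 L t y)
        (pX (mL L * Real.exp (2 * L * t + L) / (2 * Real.pi) ^ (3 : ℕ)))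
        (dpX (mL L * Real.exp (2 * L * t + L) / (2 * Real.pi) ^ (3 : ℕ)) (x 2)) x
        (Xi0_profile L t) (hpX _ (x 2))]
      simp [dpX, Matrix.vecHead, Matrix.vecTail]
  · -- mean zero
    intro t i
    constructor
    · have hfun : (fun x : Fin 3 → ℝ => v0 L t x i) = fun x =>
          (pv (mL L * Real.exp (2 * L * t + L) / (2 * Real.pi) ^ ((3 : ℝ) / 2)) i) (x 2) :=
        funext fun x => v0_profile L t x i
      rw [hfun, cube_third]
      fin_cases i <;>
        simp [pv, Matrix.vecHead, Matrix.vecTail, intervalIntegral.integral_const_mul,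
          integral_sin, Real.cos_neg]
    · have hfun : (fun x : Fin 3 → ℝ => Xi0 L t x i) = fun x =>
          (pX (mL L * Real.exp (2 * L * t + L) / (2 * Real.pi) ^ (3 : ℕ)) i) (x 2) :=
        funext fun x => Xi0_profile L t x i
      rw [hfun, cube_third]
      fin_cases i <;>
        simp [pX, Matrix.vecHead, Matrix.vecTail, intervalIntegral.integral_const_mul,
          integral_sin, integral_cos, Real.cos_neg, Real.sin_neg]
  · -- L² norms
    intro t
    constructor
    · have hfun : (fun x : Fin 3 → ℝ => ∑ i, v0 L t x i ^ 2) = fun x =>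
          sqProfile (mL L * Real.exp (2 * L * t + L) / (2 * Real.pi) ^ ((3 : ℝ) / 2)) (x 2) := by
        funext x
        simp [v0, sqProfile, Fin.sum_univ_three]
        try ring
      rw [hfun, cube_third]
      simp only [sqProfile]
      have hI : ∫ z in (-Real.pi)..Real.pi,
          (mL L * Real.exp (2 * L * t + L) / (2 * Real.pi) ^ ((3 : ℝ) / 2)) ^ 2 *
            Real.sin z ^ 2 =
          (mL L * Real.exp (2 * L * t + L) / (2 * Real.pi) ^ ((3 : ℝ) / 2)) ^ 2 * Real.pi := by
        rw [intervalIntegral.integral_const_mul, integral_sin_sq]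
        simp [Real.sin_neg, Real.cos_neg]
        try ring
      rw [hI]
      have hval : (2 * Real.pi) ^ 2 *
          ((mL L * Real.exp (2 * L * t + L) / (2 * Real.pi) ^ ((3 : ℝ) / 2)) ^ 2 * Real.pi) =
          (mL L * Real.exp (2 * L * t + L)) ^ 2 / 2 := by
        rw [div_pow, hP2]
        field_simp
      rw [hval, Real.sqrt_div (sq_nonneg _), Real.sqrt_sq (by positivity), hE t]
    · have hfun : (fun x : Fin 3 → ℝ => ∑ i, Xi0 L t x i ^ 2) = fun x =>
          constProfile ((mL L * Real.exp (2 * L * t + L)) ^ 2 / ((2 * Real.pi) ^ (3 : ℕ)) ^ 2)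
            (x 2) := by
        funext x
        simp only [Xi0, Fin.sum_univ_three, Matrix.cons_val_zero, Matrix.cons_val_one,
          Matrix.head_cons, Matrix.cons_val_two, Matrix.tail_cons]
        simp only [constProfile]
        have := Real.sin_sq_add_cos_sq (x 2)
        field_simp
        rw [this]
        ring
      rw [hfun, cube_third]
      simp only [constProfile]
      have hI : ∫ _ in (-Real.pi)..Real.pi,
          (mL L * Real.exp (2 * L * t + L)) ^ 2 / ((2 * Real.pi) ^ (3 : ℕ)) ^ 2 =
          2 * Real.pi * ((mL L * Real.exp (2 * L * t + L)) ^ 2 / ((2 * Real.pi) ^ (3 : ℕ)) ^ 2) := by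
        rw [intervalIntegral.integral_const, smul_eq_mul]
        ring
      rw [hI]
      have hval : (2 * Real.pi) ^ 2 *
          (2 * Real.pi * ((mL L * Real.exp (2 * L * t + L)) ^ 2 / ((2 * Real.pi) ^ (3 : ℕ)) ^ 2)) =
          (mL L * Real.exp (2 * L * t + L)) ^ 2 / ((2 * Real.pi) ^ ((3 : ℝ) / 2)) ^ (2 : ℕ) := by
        rw [hP2]
        field_simp
      rw [hval, Real.sqrt_div (sq_nonneg _), Real.sqrt_sq (by positivity),
        Real.sqrt_sq hPpos.le, hE t]
  · -- matrix properties
    intro t x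
    refine ⟨?_, ?_, ?_⟩
    · ext i j
      fin_cases i <;> fin_cases j <;>
        simp [Mv, Matrix.vecHead, Matrix.vecTail]
    · simp [Matrix.trace, Matrix.diag, Fin.sum_univ_three, Mv, Matrix.vecHead, Matrix.vecTail]
    · ext i j
      fin_cases i <;> fin_cases j <;>
        simp [MXi, Matrix.vecHead, Matrix.vecTail, Matrix.neg_apply] <;> ring
  · -- the PDEs
    intro Υ₁ Υ₂ hΥ
    constructor
    · intro t x i
      have hdv : deriv (fun s => v0 L s x i) t = 2 * L * v0 L t x i := by
        fin_cases i
        · have he : HasDerivAt (fun s : ℝ => Real.exp (2 * L * s + L))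
              (Real.exp (2 * L * t + L) * (2 * L)) t := by
            simpa using (((hasDerivAt_id t).const_mul (2 * L)).add_const L).exp
          have h1 : HasDerivAt (fun s : ℝ => mL L * Real.exp (2 * L * s + L) /
              (2 * Real.pi) ^ ((3 : ℝ) / 2) * Real.sin (x 2))
              (mL L * (Real.exp (2 * L * t + L) * (2 * L)) /
              (2 * Real.pi) ^ ((3 : ℝ) / 2) * Real.sin (x 2)) t :=
            ((he.const_mul (mL L)).div_const _).mul_const _
          simp only [v0, Fin.zero_eta, Fin.isValue, Matrix.cons_val_zero]
          rw [h1.deriv]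
          ring
        · simp [v0]
        · simp [v0]
      rw [hdv, div_quad1 L t (Υ₁ t) ((Υ₁ t)⁻¹ * Υ₂ t ^ 2) x i, div_Mv L t x i]
      fin_cases i <;> simp [v0, Matrix.vecHead, Matrix.vecTail] <;> ring
    · intro t x i
      have hdX : deriv (fun s => Xi0 L s x i) t = 2 * L * Xi0 L t x i := by
        have he : HasDerivAt (fun s : ℝ => Real.exp (2 * L * s + L))
            (Real.exp (2 * L * t + L) * (2 * L)) t := by
          simpa using (((hasDerivAt_id t).const_mul (2 * L)).add_const L).exp
        fin_cases i
        · have h1 : HasDerivAt (fun s : ℝ => mL L * Real.exp (2 * L * s + L) /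
              (2 * Real.pi) ^ (3 : ℕ) * Real.sin (x 2))
              (mL L * (Real.exp (2 * L * t + L) * (2 * L)) /
              (2 * Real.pi) ^ (3 : ℕ) * Real.sin (x 2)) t :=
            ((he.const_mul (mL L)).div_const _).mul_const _
          simp only [Xi0, Fin.zero_eta, Fin.isValue, Matrix.cons_val_zero]
          rw [h1.deriv]
          ring
        · have h1 : HasDerivAt (fun s : ℝ => mL L * Real.exp (2 * L * s + L) /
              (2 * Real.pi) ^ (3 : ℕ) * Real.cos (x 2))
              (mL L * (Real.exp (2 * L * t + L) * (2 * L)) /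
              (2 * Real.pi) ^ (3 : ℕ) * Real.cos (x 2)) t :=
            ((he.const_mul (mL L)).div_const _).mul_const _
          simp only [Xi0, Fin.mk_one, Fin.isValue, Matrix.cons_val_one, Matrix.head_cons,
            Matrix.cons_val_zero]
          rw [h1.deriv]
          ring
        · simp [Xi0]
      rw [hdX, div_quad2 L t x i, div_MXi L t x i]
      fin_cases i <;> simp [Xi0, Matrix.vecHead, Matrix.vecTail] <;> ring
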